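/- Let G(V,E) be a bipartite graph that has a perfect matching, with an integer weight function w on its edges, and let C be an even cycle in G with nonzero circulation c_w(C) ≠ 0. Let E_1 ⊆ E be the union of all perfect matchings of G of minimum w-weight. Then the subgraph G_1(V, E_1) does not contain the cycle C; equivalently, if every edge of an even cycle C of G lies in some minimum w-weight perfect matching of G, then c_w(C) = 0. -/

import Mathlib

/-- `M` is a perfect matching of the graph `G`: every edge of `M` is an edge of `G`,
and every vertex lies in exactly one edge of `M`. -/
def IsPerfectMatching {V : Type*} (G : SimpleGraph V) (M : Finset (Sym2 V)) : Prop :=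
  (∀ e ∈ M, e ∈ G.edgeSet) ∧ ∀ v : V, ∃! e, e ∈ M ∧ v ∈ e

/-- The weight of a matching is the sum of the weights of its edges. -/
def matchWeight {V : Type*} (w : Sym2 V → ℤ) (M : Finset (Sym2 V)) : ℤ := ∑ e ∈ M, w e

/-- The alternating sum `a₁ - a₂ + a₃ - ⋯` of a list. -/
def altSum : List ℤ → ℤ
  | [] => 0
  | a :: l => a - altSum l

/-- The circulation of a cycle (given by the list of its edges in cyclic order):
the absolute value of the alternating sum of the edge weights. -/
def circulation {V : Type*} (w : Sym2 V → ℤ) (l : List (Sym2 V)) : ℤ :=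
  |altSum (l.map w)|

namespace CircAux

variable {V : Type*} [DecidableEq V]

lemma pm_countP {G : SimpleGraph V} {M : Finset (Sym2 V)} (hM : IsPerfectMatching G M) (x : V) :
    M.val.countP (x ∈ ·) = 1 := by
  obtain ⟨e, ⟨heM, hxe⟩, huniq⟩ := hM.2 x
  have h1 : M.filter (fun e => x ∈ e) = {e} := by
    apply Finset.eq_singleton_iff_unique_mem.mpr
    refine ⟨Finset.mem_filter.mpr ⟨heM, hxe⟩, fun e' he' => ?_⟩
    have := Finset.mem_filter.mp he'
    exact huniq e' ⟨this.1, this.2⟩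
  have : (M.filter (fun e => x ∈ e)).card = 1 := by rw [h1]; simp
  rwa [Multiset.countP_eq_card_filter, ← Finset.filter_val]

lemma sum_countP (X : Finset V) (S : Multiset (Sym2 V)) :
    ∑ a ∈ X, S.countP (a ∈ ·) = (S.map (fun e => (X.filter (· ∈ e)).card)).sum := by
  induction S using Multiset.induction with
  | empty => simp
  | cons e S ih =>
    simp only [Multiset.countP_cons, Multiset.map_cons, Multiset.sum_cons,
      Finset.sum_add_distrib, ih, Finset.card_filter]
    ring

variable [Fintype V]

/-- A `k`-regular multigraph on the edges of a bipartite graph `G` has total weight at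
least `k * μ`, where `μ` is a lower bound for the weights of perfect matchings of `G`. -/
lemma regular_bound (G : SimpleGraph V) (col : G.Coloring (Fin 2))
    (w : Sym2 V → ℤ) (μ : ℤ) (hμ : ∀ M', IsPerfectMatching G M' → μ ≤ matchWeight w M') :
    ∀ (k : ℕ) (S : Multiset (Sym2 V)), (∀ e ∈ S, e ∈ G.edgeSet) →
      (∀ x, S.countP (x ∈ ·) = k) → (k : ℤ) * μ ≤ (S.map w).sum := by
  have fin2 : ∀ i : Fin 2, i ≠ 0 → i = 1 := by decide
  intro k
  induction k with
  | zero =>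
    intro S hSG hdeg
    have hS0 : S = 0 := by
      rw [Multiset.eq_zero_iff_forall_notMem]
      intro e he
      have h1 : 0 < S.countP (e.out.1 ∈ ·) :=
        Multiset.countP_pos.mpr ⟨e, he, Sym2.out_fst_mem e⟩
      rw [hdeg] at h1; exact lt_irrefl 0 h1
    simp [hS0]
  | succ k ih =>
    intro S hSG hdeg
    -- structure of edges
    have key : ∀ e ∈ S, ∃ u v, e = s(u, v) ∧ G.Adj u v ∧ col u = 0 ∧ col v = 1 := by
      intro e he
      induction e with
      | h u v =>
        have hadj : G.Adj u v := (SimpleGraph.mem_edgeSet G).mp (hSG _ he)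
        rcases eq_or_ne (col u) 0 with h0 | h0
        · exact ⟨u, v, rfl, hadj, h0, fin2 _ (fun hv => (col.valid hadj) (h0.trans hv.symm))⟩
        · refine ⟨v, u, Sym2.eq_swap, hadj.symm, ?_, fin2 _ h0⟩
          by_contra hv
          exact col.valid hadj.symm ((fin2 _ hv).trans (fin2 _ h0).symm)
    set A : Finset V := Finset.univ.filter (fun v => col v = 0) with hA
    set B : Finset V := Finset.univ.filter (fun v => col v = 1) with hB
    -- every edge of S has exactly one endpoint in A and one in B
    have hfA : ∀ e ∈ S, (A.filter (· ∈ e)).card = 1 := by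
      intro e he
      obtain ⟨u, v, rfl, hadj, hu, hv⟩ := key e he
      rw [Finset.card_eq_one]
      refine ⟨u, Finset.eq_singleton_iff_unique_mem.mpr ⟨?_, ?_⟩⟩
      · simp [hA, hu, Sym2.mem_mk_left]
      · intro x hx
        simp only [hA, Finset.mem_filter, Finset.mem_univ, true_and, Sym2.mem_iff] at hx
        rcases hx.2 with rfl | rfl
        · rfl
        · exact absurd hx.1 (by simp [hv])
    have hfB : ∀ e ∈ S, (B.filter (· ∈ e)).card = 1 := by
      intro e he
      obtain ⟨u, v, rfl, hadj, hu, hv⟩ := key e he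
      rw [Finset.card_eq_one]
      refine ⟨v, Finset.eq_singleton_iff_unique_mem.mpr ⟨?_, ?_⟩⟩
      · simp [hB, hv, Sym2.mem_mk_right]
      · intro x hx
        simp only [hB, Finset.mem_filter, Finset.mem_univ, true_and, Sym2.mem_iff] at hx
        rcases hx.2 with rfl | rfl
        · exact absurd hx.1 (by simp [hu])
        · rfl
    -- |A| = |B|
    have hcardA : A.card * (k + 1) = Multiset.card S := by
      have h1 : ∑ a ∈ A, S.countP (a ∈ ·) = A.card * (k + 1) := by
        simp [hdeg, Finset.sum_const, mul_comm]
      have h2 : (S.map (fun e => (A.filter (· ∈ e)).card)).sum = Multiset.card S := by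
        rw [Multiset.map_congr rfl hfA]
        simp [Multiset.map_const']
      rw [← h1, sum_countP, h2]
    have hcardB : B.card * (k + 1) = Multiset.card S := by
      have h1 : ∑ a ∈ B, S.countP (a ∈ ·) = B.card * (k + 1) := by
        simp [hdeg, Finset.sum_const, mul_comm]
      have h2 : (S.map (fun e => (B.filter (· ∈ e)).card)).sum = Multiset.card S := by
        rw [Multiset.map_congr rfl hfB]
        simp [Multiset.map_const']
      rw [← h1, sum_countP, h2]
    have hAB : A.card = B.card :=
      Nat.eq_of_mul_eq_mul_right (Nat.succ_pos k) (hcardA.trans hcardB.symm)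
    -- Hall's condition
    set t : {a // a ∈ A} → Finset V :=
      (fun a => Finset.univ.filter (fun b => s(a.1, b) ∈ S)) with ht
    have hall : ∀ T : Finset {a // a ∈ A}, T.card ≤ (T.biUnion t).card := by
      intro T
      set T' : Finset V := T.image Subtype.val with hT'
      have hcardT' : T'.card = T.card := Finset.card_image_of_injective _ Subtype.val_injective
      set NT : Finset V := T.biUnion t with hNT
      have hpoint : ∀ e ∈ S, (T'.filter (· ∈ e)).card ≤ (NT.filter (· ∈ e)).card := by
        intro e he
        obtain ⟨u, v, rfl, hadj, hu, hv⟩ := key e he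
        by_cases huT : u ∈ T'
        · -- LHS ≤ 1, RHS ≥ 1
          have hle1 : (T'.filter (· ∈ s(u, v))).card ≤ 1 := by
            apply Finset.card_le_one.mpr
            intro x hx y hy
            simp only [Finset.mem_filter, Sym2.mem_iff] at hx hy
            have hxA : x ∈ A := by
              obtain ⟨a, haT, rfl⟩ := Finset.mem_image.mp hx.1; exact a.2
            have hyA : y ∈ A := by
              obtain ⟨a, haT, rfl⟩ := Finset.mem_image.mp hy.1; exact a.2
            have hx' : x = u := by
              rcases hx.2 with rfl | rfl
              · rfl
              · exfalso; rw [hA] at hxA; simp [hv] at hxA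
            have hy' : y = u := by
              rcases hy.2 with rfl | rfl
              · rfl
              · exfalso; rw [hA] at hyA; simp [hv] at hyA
            rw [hx', hy']
          have hge1 : 1 ≤ (NT.filter (· ∈ s(u, v))).card := by
            obtain ⟨a, haT, hau⟩ := Finset.mem_image.mp huT
            apply Finset.card_pos.mpr
            refine ⟨v, Finset.mem_filter.mpr ⟨?_, by simp [Sym2.mem_mk_right]⟩⟩
            apply Finset.mem_biUnion.mpr
            exact ⟨a, haT, by simp only [ht, Finset.mem_filter, Finset.mem_univ, true_and, hau]; exact he⟩
          exact hle1.trans hge1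
        · have : T'.filter (· ∈ s(u, v)) = ∅ := by
            apply Finset.filter_eq_empty_iff.mpr
            intro x hx
            simp only [Sym2.mem_iff]
            rintro (rfl | rfl)
            · exact huT hx
            · have hxA : x ∈ A := by
                obtain ⟨a, haT, rfl⟩ := Finset.mem_image.mp hx; exact a.2
              rw [hA] at hxA; simp [hv] at hxA
          calc (T'.filter (· ∈ s(u, v))).card = 0 := by rw [this]; simp
            _ ≤ _ := Nat.zero_le _
      -- sum the pointwise bound
      have h1 : ∑ a ∈ T', S.countP (a ∈ ·) = T'.card * (k + 1) := by
        simp [hdeg, Finset.sum_const, mul_comm]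
      have h2 : ∑ b ∈ NT, S.countP (b ∈ ·) = NT.card * (k + 1) := by
        simp [hdeg, Finset.sum_const, mul_comm]
      have h3 : T'.card * (k + 1) ≤ NT.card * (k + 1) := by
        rw [← h1, ← h2, sum_countP, sum_countP]
        exact Multiset.sum_map_le_sum_map _ _ hpoint
      rw [← hcardT']
      exact Nat.le_of_mul_le_mul_right h3 (Nat.succ_pos k)
    -- extract a perfect matching via Hall's theorem
    obtain ⟨f, hfinj, hft⟩ := (Finset.all_card_le_biUnion_card_iff_exists_injective t).mp hall
    have hfS : ∀ a : {a // a ∈ A}, s(a.1, f a) ∈ S := by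
      intro a
      have := hft a
      simpa [ht] using this
    have hcolf : ∀ a : {a // a ∈ A}, col (f a) = 1 := by
      intro a
      have hadj : G.Adj a.1 (f a) := (SimpleGraph.mem_edgeSet G).mp (hSG _ (hfS a))
      have ha0 : col a.1 = 0 := by
        have := a.2; simp only [hA, Finset.mem_filter, Finset.mem_univ, true_and] at this
        exact this
      refine fin2 _ (fun h0 => col.valid hadj (ha0.trans h0.symm))
    have hcola : ∀ a : {a // a ∈ A}, col a.1 = 0 := by
      intro a
      have := a.2; simp only [hA, Finset.mem_filter, Finset.mem_univ, true_and] at this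
      exact this
    have hginj : Function.Injective (fun a : {a // a ∈ A} => s(a.1, f a)) := by
      intro a b hab
      simp only [Sym2.eq, Sym2.rel_iff', Prod.mk.injEq, Prod.swap_prod_mk] at hab
      rcases hab with ⟨h1, _⟩ | ⟨h1, h2⟩
      · exact Subtype.ext h1
      · exfalso
        have := hcolf b
        rw [← h1, hcola a] at this
        exact absurd this (by decide)
    set M : Finset (Sym2 V) := Finset.univ.map ⟨fun a => s(a.1, f a), hginj⟩ with hM
    have hmemM : ∀ e, e ∈ M ↔ ∃ a : {a // a ∈ A}, s(a.1, f a) = e := by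
      intro e; simp [hM]
    -- surjectivity of f onto B
    have hfB' : ∀ a : {a // a ∈ A}, f a ∈ B := by
      intro a; rw [hB]; simp [hcolf a]
    have hsurj : ∀ b ∈ B, ∃ a : {a // a ∈ A}, f a = b := by
      have hcards : Fintype.card {a // a ∈ A} = Fintype.card {b // b ∈ B} := by
        simp [Fintype.card_coe, hAB]
      have hbij : Function.Bijective (fun a : {a // a ∈ A} => (⟨f a, hfB' a⟩ : {b // b ∈ B})) := by
        rw [Fintype.bijective_iff_injective_and_card]
        exact ⟨fun a b hab => hfinj (congrArg Subtype.val hab), hcards⟩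
      intro b hb
      obtain ⟨a, ha⟩ := hbij.2 ⟨b, hb⟩
      exact ⟨a, congrArg Subtype.val ha⟩
    have hMpm : IsPerfectMatching G M := by
      constructor
      · intro e he
        obtain ⟨a, rfl⟩ := (hmemM e).mp he
        exact hSG _ (hfS a)
      · intro v
        by_cases hv : col v = 0
        · have hvA : v ∈ A := by rw [hA]; simp [hv]
          refine ⟨s((⟨v, hvA⟩ : {a // a ∈ A}).1, f ⟨v, hvA⟩),
            ⟨(hmemM _).mpr ⟨⟨v, hvA⟩, rfl⟩, Sym2.mem_mk_left _ _⟩, ?_⟩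
          rintro e ⟨heM, hve⟩
          obtain ⟨a, rfl⟩ := (hmemM e).mp heM
          rcases Sym2.mem_iff.mp hve with h | h
          · have ha : a = ⟨v, hvA⟩ := Subtype.ext h.symm
            rw [ha]
          · exfalso; rw [h] at hv; rw [hcolf a] at hv; exact absurd hv (by decide)
        · have hv1 : col v = 1 := fin2 _ hv
          have hvB : v ∈ B := by rw [hB]; simp [hv1]
          obtain ⟨a₀, ha₀⟩ := hsurj v hvB
          refine ⟨s(a₀.1, f a₀), ⟨(hmemM _).mpr ⟨a₀, rfl⟩, by rw [ha₀]; exact Sym2.mem_mk_right _ _⟩, ?_⟩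
          rintro e ⟨heM, hve⟩
          obtain ⟨a, rfl⟩ := (hmemM e).mp heM
          rcases Sym2.mem_iff.mp hve with h | h
          · exfalso; rw [h] at hv; exact hv (hcola a)
          · have : a = a₀ := hfinj (by rw [← h, ha₀])
            rw [this]
    -- M.val ≤ S
    have hMle : M.val ≤ S := by
      rw [Multiset.le_iff_count]
      intro e
      by_cases he : e ∈ M
      · rw [Multiset.count_eq_one_of_mem M.nodup he]
        obtain ⟨a, rfl⟩ := (hmemM e).mp he
        exact Multiset.one_le_count_iff_mem.mpr (hfS a)
      · rw [Multiset.count_eq_zero_of_notMem he]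
        exact Nat.zero_le _
    set S' : Multiset (Sym2 V) := S - M.val with hS'
    have hSsplit : S' + M.val = S := tsub_add_cancel_of_le hMle
    have hS'G : ∀ e ∈ S', e ∈ G.edgeSet := fun e he =>
      hSG e (Multiset.mem_of_le tsub_le_self he)
    have hS'deg : ∀ x, S'.countP (x ∈ ·) = k := by
      intro x
      have := hdeg x
      rw [← hSsplit, Multiset.countP_add, pm_countP hMpm x] at this
      omega
    have hIH := ih S' hS'G hS'deg
    have hwM : (M.val.map w).sum = matchWeight w M := rfl
    have hsum : (S.map w).sum = (S'.map w).sum + matchWeight w M := by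
      rw [← hSsplit, Multiset.map_add, Multiset.sum_add, hwM]
    rw [hsum]
    push_cast
    have := hμ M hMpm
    linarith


mutual
  /-- Elements at even positions (0-indexed) of a list. -/
  def evens {α : Type*} : List α → List α
    | [] => []
    | a :: l => a :: odds l
  /-- Elements at odd positions (0-indexed) of a list. -/
  def odds {α : Type*} : List α → List α
    | [] => []
    | _ :: l => evens l
end

variable {α β : Type*}

@[simp] lemma evens_nil : evens ([] : List α) = [] := rfl
@[simp] lemma odds_nil : odds ([] : List α) = [] := rfl
@[simp] lemma evens_cons (a : α) (l : List α) : evens (a :: l) = a :: odds l := rfl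
@[simp] lemma odds_cons (a : α) (l : List α) : odds (a :: l) = evens l := rfl

lemma evens_odds_map (f : α → β) (l : List α) :
    evens (l.map f) = (evens l).map f ∧ odds (l.map f) = (odds l).map f := by
  induction l with
  | nil => simp
  | cons a l ih => simp [ih.2, ih.1]

lemma evens_odds_length (l : List α) :
    (evens l).length = (l.length + 1) / 2 ∧ (odds l).length = l.length / 2 := by
  induction l with
  | nil => simp
  | cons a l ih => simp [ih.1, ih.2]; omega

lemma evens_subset (l : List α) : (∀ x ∈ evens l, x ∈ l) ∧ (∀ x ∈ odds l, x ∈ l) := by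
  induction l with
  | nil => simp
  | cons a l ih =>
    constructor
    · intro x hx
      rcases List.mem_cons.mp hx with rfl | hx
      · exact List.mem_cons_self
      · exact List.mem_cons_of_mem _ (ih.2 x hx)
    · intro x hx
      exact List.mem_cons_of_mem _ (ih.1 x hx)

lemma altSum_eq (l : List ℤ) : altSum l = (evens l).sum - (odds l).sum := by
  induction l with
  | nil => simp [altSum]
  | cons a l ih => simp [altSum, ih]; ring

variable [DecidableEq α] {V : Type*} [DecidableEq V]

/-- Alternating degree identity along a walk. -/
lemma walk_deg {G : SimpleGraph V} {u v : V} (p : G.Walk u v) (x : V) :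
    ((evens p.edges).countP (x ∈ ·) : ℤ) - (odds p.edges).countP (x ∈ ·)
      = (if x = u then 1 else 0) + (-1) ^ (p.length + 1) * (if x = v then 1 else 0) := by
  induction p with
  | nil => simp; split <;> simp_all
  | @cons u u' v h p ih =>
    have hne : u ≠ u' := h.ne
    have hmem : (x ∈ s(u, u')) = (x = u ∨ x = u') := by simp [Sym2.mem_iff]
    simp only [SimpleGraph.Walk.edges_cons, evens_cons, odds_cons, List.countP_cons,
      SimpleGraph.Walk.length_cons]
    push_cast
    rw [show ((p.length + 1) + 1) = p.length + 2 by ring]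
    have h2 : (-1 : ℤ) ^ (p.length + 2) = -((-1) ^ (p.length + 1)) := by ring
    rw [h2]
    have hind : (if decide (x ∈ s(u, u')) = true then (1:ℤ) else 0)
        = (if x = u then 1 else 0) + (if x = u' then 1 else 0) := by
      by_cases hxu : x = u
      · subst hxu
        simp [Sym2.mem_mk_left, hne]
      · by_cases hxu' : x = u'
        · subst hxu'
          simp [Sym2.mem_mk_right, hxu]
        · simp [hmem, hxu, hxu']
    have := ih
    push_cast at this ⊢
    rw [hind]
    linarith [this]


variable {V : Type*} [Fintype V] [DecidableEq V]

/-- The contradiction: given lists `H`, `L` of `G`-edges with equal "degree" at every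
vertex and a min-weight perfect matching through every edge of `H`, with
`sum w L < sum w H`, we reach a contradiction. -/
lemma main_aux (G : SimpleGraph V) (col : G.Coloring (Fin 2)) (w : Sym2 V → ℤ) (μ : ℤ)
    (hμ : ∀ M', IsPerfectMatching G M' → μ ≤ matchWeight w M')
    (H L : List (Sym2 V))
    (hLG : ∀ e ∈ L, e ∈ G.edgeSet)
    (hdeg : ∀ x : V, Multiset.countP (x ∈ ·) (↑H : Multiset (Sym2 V))
      = Multiset.countP (x ∈ ·) (↑L : Multiset (Sym2 V)))
    (hlen : H.length = L.length)
    (Φ : Sym2 V → Finset (Sym2 V))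
    (hΦ : ∀ e ∈ H, IsPerfectMatching G (Φ e) ∧ matchWeight w (Φ e) = μ ∧ e ∈ Φ e)
    (hw : (L.map w).sum < (H.map w).sum) : False := by
  classical
  set S : Multiset (Sym2 V) := ((H.map (fun e => (Φ e).val)).sum : Multiset (Sym2 V)) with hS
  -- general facts by induction on the defining list
  have gen : ∀ (J : List (Sym2 V)), (∀ e ∈ J, IsPerfectMatching G (Φ e) ∧
      matchWeight w (Φ e) = μ ∧ e ∈ Φ e) →
      (∀ x : V, Multiset.countP (x ∈ ·) ((J.map (fun e => (Φ e).val)).sum) = J.length) ∧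
      (∀ e ∈ ((J.map (fun e => (Φ e).val)).sum : Multiset (Sym2 V)), e ∈ G.edgeSet) ∧
      ((((J.map (fun e => (Φ e).val)).sum : Multiset (Sym2 V)).map w).sum = (J.length : ℤ) * μ) ∧
      ((↑J : Multiset (Sym2 V)) ≤ (J.map (fun e => (Φ e).val)).sum) := by
    intro J hJ
    induction J with
    | nil => simp
    | cons e J ih =>
      have he := hJ e List.mem_cons_self
      have ih' := ih (fun e' he' => hJ e' (List.mem_cons_of_mem _ he'))
      refine ⟨?_, ?_, ?_, ?_⟩
      · intro x
        simp only [List.map_cons, List.sum_cons, Multiset.countP_add, ih'.1 x,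
          pm_countP he.1 x, List.length_cons]
        ring
      · intro e' he'
        simp only [List.map_cons, List.sum_cons, Multiset.mem_add] at he'
        rcases he' with h | h
        · exact he.1.1 e' h
        · exact ih'.2.1 e' h
      · simp only [List.map_cons, List.sum_cons, Multiset.map_add, Multiset.sum_add,
          ih'.2.2.1, List.length_cons]
        have : ((Φ e).val.map w).sum = μ := he.2.1 ▸ rfl
        rw [this]; push_cast; ring
      · simp only [List.map_cons, List.sum_cons]
        rw [← Multiset.cons_coe, ← Multiset.singleton_add]
        exact add_le_add (Multiset.singleton_le.mpr he.2.2) ih'.2.2.2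
  obtain ⟨hdegS, hSG, hwS, hHle⟩ := gen H hΦ
  set S' : Multiset (Sym2 V) := S - ↑H + ↑L with hS'
  have hS'G : ∀ e ∈ S', e ∈ G.edgeSet := by
    intro e he
    rcases Multiset.mem_add.mp he with h | h
    · exact hSG e (Multiset.mem_of_le tsub_le_self h)
    · exact hLG e (Multiset.mem_coe.mp h)
  have hS'deg : ∀ x : V, Multiset.countP (x ∈ ·) S' = H.length := by
    intro x
    rw [hS', Multiset.countP_add, Multiset.countP_sub hHle, hdegS x, ← hdeg x]
    have : Multiset.countP (x ∈ ·) (↑H : Multiset (Sym2 V)) ≤ H.length := by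
      have := Multiset.countP_le_card (x ∈ ·) (↑H : Multiset (Sym2 V))
      simpa using this
    omega
  have hbound := regular_bound G col w μ hμ H.length S' hS'G hS'deg
  have hsplit : (S - ↑H) + ↑H = S := tsub_add_cancel_of_le hHle
  have hwsub : (((S - ↑H : Multiset (Sym2 V))).map w).sum
      = (S.map w).sum - (H.map w).sum := by
    have := congrArg (fun T => ((T : Multiset (Sym2 V)).map w).sum) hsplit
    simp only [Multiset.map_add, Multiset.sum_add, Multiset.map_coe, Multiset.sum_coe] at this
    linarith
  have hwS' : (S'.map w).sum = (H.length : ℤ) * μ - (H.map w).sum + (L.map w).sum := by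
    rw [hS', Multiset.map_add, Multiset.sum_add, hwsub, hwS]
    simp [Multiset.map_coe, Multiset.sum_coe]
  rw [hwS'] at hbound
  linarith

end CircAux

open CircAux

/-- Let `G` be a bipartite graph with a perfect matching, `w` an integer weight function
on its edges, and `C` an even cycle of `G` with nonzero circulation.  Then the subgraph
`G₁` formed by the union of all minimum-weight perfect matchings of `G` does not contain
`C`, i.e. it is not the case that every edge of `C` lies in some minimum-weight perfect
matching of `G`. -/
theorem cycle_nonzero_circulation_not_in_union_of_min_matchings
    {V : Type*} [Fintype V] [DecidableEq V]
    (G : SimpleGraph V) (hbip : G.Colorable 2) (w : Sym2 V → ℤ)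
    (hpm : ∃ M, IsPerfectMatching G M)
    {v₀ : V} (c : G.Walk v₀ v₀) (hc : c.IsCycle) (heven : Even c.length)
    (hcirc : circulation w c.edges ≠ 0) :
    ¬ (∀ e ∈ c.edges, ∃ M : Finset (Sym2 V), IsPerfectMatching G M ∧
        (∀ M', IsPerfectMatching G M' → matchWeight w M ≤ matchWeight w M') ∧ e ∈ M) := by
  intro Hyp
  classical
  obtain ⟨col⟩ := hbip
  set l := c.edges with hl
  have hs0 : altSum (l.map w) ≠ 0 := by
    intro h
    exact hcirc (by rw [circulation, h, abs_zero])
  have hch : ∀ e : Sym2 V, ∃ M : Finset (Sym2 V), e ∈ l →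
      IsPerfectMatching G M ∧ (∀ M', IsPerfectMatching G M' →
        matchWeight w M ≤ matchWeight w M') ∧ e ∈ M := by
    intro e
    by_cases he : e ∈ l
    · obtain ⟨M, hM⟩ := Hyp e he; exact ⟨M, fun _ => hM⟩
    · exact ⟨∅, fun h => absurd h he⟩
  choose Φ hΦ using hch
  have hlne : l ≠ [] := by
    intro h
    apply hs0; rw [h]; rfl
  obtain ⟨e₀, he₀⟩ := List.exists_mem_of_ne_nil l hlne
  set μ := matchWeight w (Φ e₀) with hμdef
  have hμ : ∀ M', IsPerfectMatching G M' → μ ≤ matchWeight w M' := (hΦ e₀ he₀).2.1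
  have heq : ∀ e ∈ l, matchWeight w (Φ e) = μ := fun e he =>
    le_antisymm ((hΦ e he).2.1 _ (hΦ e₀ he₀).1) ((hΦ e₀ he₀).2.1 _ (hΦ e he).1)
  obtain ⟨m, hm⟩ := heven
  have hlenl : l.length = m + m := by rw [hl, SimpleGraph.Walk.length_edges, hm]
  have hlens := evens_odds_length l
  have hlenE : (evens l).length = m := by omega
  have hlenO : (odds l).length = m := by omega
  have hlG : ∀ e ∈ l, e ∈ G.edgeSet := fun e he => c.edges_subset_edgeSet he
  have hdegeq : ∀ x : V, Multiset.countP (x ∈ ·) (↑(evens l) : Multiset (Sym2 V))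
      = Multiset.countP (x ∈ ·) (↑(odds l) : Multiset (Sym2 V)) := by
    intro x
    have hwd := walk_deg c x
    rw [show c.edges = l from hl.symm] at hwd
    have hodd : Odd (c.length + 1) := ⟨m, by omega⟩
    rw [Odd.neg_one_pow hodd] at hwd
    have hrhs : (if x = v₀ then (1:ℤ) else 0) + -1 * (if x = v₀ then 1 else 0) = 0 := by
      split <;> ring
    rw [hrhs] at hwd
    rw [Multiset.coe_countP, Multiset.coe_countP]
    omega
  have hΦ' : ∀ (J : List (Sym2 V)), (∀ e ∈ J, e ∈ l) → ∀ e ∈ J,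
      IsPerfectMatching G (Φ e) ∧ matchWeight w (Φ e) = μ ∧ e ∈ Φ e := by
    intro J hJ e he
    exact ⟨(hΦ e (hJ e he)).1, heq e (hJ e he), (hΦ e (hJ e he)).2.2⟩
  have hsub := evens_subset l
  have halt : altSum (l.map w) = ((evens l).map w).sum - ((odds l).map w).sum := by
    rw [altSum_eq, (evens_odds_map w l).1, (evens_odds_map w l).2]
  rcases hs0.lt_or_gt with hneg | hpos
  · exact main_aux G col w μ hμ (odds l) (evens l)
      (fun e he => hlG e (hsub.1 e he))
      (fun x => (hdegeq x).symm)
      (by omega)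
      Φ (hΦ' _ hsub.2)
      (by linarith)
  · exact main_aux G col w μ hμ (evens l) (odds l)
      (fun e he => hlG e (hsub.2 e he))
      hdegeq
      (by omega)
      Φ (hΦ' _ hsub.1)
      (by linarith)
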